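/- In the automaton group of automaton 2402, the element c has infinite order: c^n(10^∞) is left-shift equivalent to 0^∞ for all n ≥ 0 (using that x|_{00} = c for every x ∈ {a,b,c}), while c^{-2}(10^∞) = 101^∞. -/

import Mathlib

namespace Stmt17


/-- A Mealy automaton over the binary alphabet with state set `S`. -/
structure Mealy (S : Type) where
  /-- transition function -/
  δ : S → Bool → S
  /-- output function -/
  τ : S → Bool → Bool

namespace Mealy

variable {S : Type} (M : Mealy S)

/-- The state reached from `q` after reading the first `n` letters of `w`. -/
def stateAt (q : S) (w : ℕ → Bool) : ℕ → S
  | 0 => q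
  | n + 1 => M.δ (stateAt q w n) (w n)

/-- The action of state `q` on infinite words. -/
def act (q : S) (w : ℕ → Bool) : ℕ → Bool :=
  fun n => M.τ (M.stateAt q w n) (w n)

/-- The inverse automaton (for automata whose output functions are involutions). -/
def inv : Mealy S := ⟨fun q b => M.δ q (M.τ q b), M.τ⟩

theorem stateAt_inv_act (h : ∀ q b, M.τ q (M.τ q b) = b) (q : S) (w : ℕ → Bool) :
    ∀ n, M.inv.stateAt q (M.act q w) n = M.stateAt q w n := by
  intro n
  induction n with
  | zero => rfl
  | succ n ih =>
    show M.inv.δ (M.inv.stateAt q (M.act q w) n) (M.act q w n) = M.δ (M.stateAt q w n) (w n)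
    rw [ih]
    show M.δ (M.stateAt q w n) (M.τ (M.stateAt q w n) (M.τ (M.stateAt q w n) (w n))) = _
    rw [h]

theorem inv_act (h : ∀ q b, M.τ q (M.τ q b) = b) (q : S) (w : ℕ → Bool) :
    M.inv.act q (M.act q w) = w := by
  funext n
  show M.inv.τ (M.inv.stateAt q (M.act q w) n) (M.act q w n) = w n
  rw [stateAt_inv_act M h]
  show M.τ (M.stateAt q w n) (M.τ (M.stateAt q w n) (w n)) = w n
  rw [h]

theorem inv_inv (h : ∀ q b, M.τ q (M.τ q b) = b) : M.inv.inv = M := by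
  obtain ⟨d, t⟩ := M
  simp only [inv]
  congr 1
  funext q b
  exact congrArg (d q) (h q b)

/-- The permutation of the set of infinite binary words defined by state `q`. -/
def perm (h : ∀ q b, M.τ q (M.τ q b) = b) (q : S) : Equiv.Perm (ℕ → Bool) where
  toFun := M.act q
  invFun := M.inv.act q
  left_inv := fun w => M.inv_act h q w
  right_inv := fun w => by
    have h2 : ∀ q b, M.inv.τ q (M.inv.τ q b) = b := h
    have := M.inv.inv_act h2 q w
    rwa [M.inv_inv h] at this

end Mealy

/-- Prepend a finite word to an infinite word. -/
def cat (u : List Bool) (w : ℕ → Bool) : ℕ → Bool :=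
  fun n => u.getD n (w (n - u.length))

/-- The (semantic) restriction of a transformation of infinite words to the
subtree indexed by the finite word `u`. -/
def resW (f : (ℕ → Bool) → ℕ → Bool) (u : List Bool) : (ℕ → Bool) → ℕ → Bool :=
  fun w n => f (cat u w) (n + u.length)

/-- The periodic infinite word with period `u`. -/
def per (u : List Bool) : ℕ → Bool := fun n => u.getD (n % u.length) false

/-- Left-shift equivalence of infinite words: they share a common infinite tail. -/
def seq (u v : ℕ → Bool) : Prop := ∃ k l : ℕ, ∀ n, u (n + k) = v (n + l)

inductive St : Type
  | a | b | c
deriving DecidableEq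

instance : Fintype St where
  elems := {.a, .b, .c}
  complete := fun x => by cases x <;> simp

/-- Automaton 2402. -/
def M : Mealy St where
  δ := fun q x => match q, x with
    | .a, false => .b | .a, true => .c
    | .b, false => .c | .b, true => .b
    | .c, false => .c | .c, true => .a
  τ := fun q x => match q with
    | .a => !x
    | .b => !x
    | .c => x

theorem M_inv : ∀ q x, M.τ q (M.τ q x) = x := by decide

/-- The automorphism of the binary tree boundary defined by state `a`. -/
def a : Equiv.Perm (ℕ → Bool) := M.perm M_inv .a

/-- The automorphism of the binary tree boundary defined by state `b`. -/
def b : Equiv.Perm (ℕ → Bool) := M.perm M_inv .b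

/-- The automorphism of the binary tree boundary defined by state `c`. -/
def c : Equiv.Perm (ℕ → Bool) := M.perm M_inv .c

-- auxiliary lemmas

theorem coe_a : ⇑a = M.act .a := rfl
theorem coe_b : ⇑b = M.act .b := rfl
theorem coe_c : ⇑c = M.act .c := rfl
theorem coe_c_symm : ⇑c⁻¹ = M.inv.act .c := rfl

/-- words w10 = 10^∞, etc. -/
theorem stateAt_cat00 (q : St) (w : ℕ → Bool) :
    ∀ n, M.stateAt q (cat [false, false] w) (n + 2) = M.stateAt .c w n := by
  intro n
  induction n with
  | zero =>
    show M.δ (M.δ q (cat [false, false] w 0)) (cat [false, false] w 1) = .c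
    cases q <;> rfl
  | succ n ih =>
    show M.δ (M.stateAt q (cat [false, false] w) (n + 2)) (cat [false, false] w (n + 2))
        = M.δ (M.stateAt .c w n) (w n)
    rw [ih]
    rfl

theorem resW_eq_c (q : St) : resW (M.act q) [false, false] = M.act .c := by
  funext w n
  show M.act q (cat [false, false] w) (n + 2) = M.act .c w n
  show M.τ (M.stateAt q (cat [false, false] w) (n + 2)) (cat [false, false] w (n + 2))
      = M.τ (M.stateAt .c w n) (w n)
  rw [stateAt_cat00]
  rfl

theorem stateAt_tail_c (q : St) (w : ℕ → Bool) (k : ℕ) (hw : ∀ n, w (n + k) = false) :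
    ∀ n, M.stateAt q w (n + (k + 2)) = St.c := by
  intro n
  have h0 : w k = false := by simpa using hw 0
  have h1 : w (k + 1) = false := by simpa [Nat.add_comm] using hw 1
  induction n with
  | zero =>
    rw [Nat.zero_add]
    show M.δ (M.δ (M.stateAt q w k) (w k)) (w (k + 1)) = .c
    rw [h0, h1]
    cases M.stateAt q w k <;> rfl
  | succ n ih =>
    have he : n + 1 + (k + 2) = (n + (k + 2)) + 1 := by omega
    rw [he]
    show M.δ (M.stateAt q w (n + (k + 2))) (w (n + (k + 2))) = .c
    rw [ih]
    have : w (n + (k + 2)) = false := by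
      have := hw (n + 2); rw [show n + 2 + k = n + (k + 2) by omega] at this; exact this
    rw [this]
    rfl

theorem act_tail (q : St) (w : ℕ → Bool) (k : ℕ) (hw : ∀ n, w (n + k) = false) :
    ∀ n, M.act q w (n + (k + 2)) = false := by
  intro n
  show M.τ (M.stateAt q w (n + (k + 2))) (w (n + (k + 2))) = false
  rw [stateAt_tail_c q w k hw n]
  have : w (n + (k + 2)) = false := by
    have := hw (n + 2); rw [show n + 2 + k = n + (k + 2) by omega] at this; exact this
  rw [this]
  rfl

theorem pow_tail : ∀ n : ℕ, ∀ m : ℕ,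
    ⇑(c ^ n) (cat [true] (fun _ => false)) (m + (1 + 2 * n)) = false := by
  intro n
  induction n with
  | zero =>
    intro m
    simp only [pow_zero, Equiv.Perm.coe_one, id_eq]
    rfl
  | succ n ih =>
    intro m
    have hp : c ^ (n + 1) = c * c ^ n := pow_succ' c n
    rw [hp]
    have := act_tail .c (⇑(c ^ n) (cat [true] (fun _ => false))) (1 + 2 * n) ih m
    rw [show m + (1 + 2 * n + 2) = m + (1 + 2 * (n + 1)) by omega] at this
    exact this

-- part 3 computations
theorem inv_stateAt_w1 :
    ∀ n, M.inv.stateAt .c (cat [true] (fun _ => false)) (n + 2) = St.c := by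
  intro n
  induction n with
  | zero => rfl
  | succ n ih =>
    show M.inv.δ (M.inv.stateAt .c (cat [true] (fun _ => false)) (n + 2))
        (cat [true] (fun _ => false) (n + 2)) = .c
    rw [ih]
    rfl

theorem csymm_w1 :
    M.inv.act .c (cat [true] (fun _ => false)) = cat [true, true] (fun _ => false) := by
  funext n
  match n with
  | 0 => rfl
  | 1 => rfl
  | n + 2 =>
    show M.inv.τ (M.inv.stateAt .c (cat [true] (fun _ => false)) (n + 2))
        (cat [true] (fun _ => false) (n + 2)) = _
    rw [inv_stateAt_w1]
    rfl

theorem inv_stateAt_w2 :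
    ∀ n, M.inv.stateAt .c (cat [true, true] (fun _ => false)) (n + 2) = St.b := by
  intro n
  induction n with
  | zero => rfl
  | succ n ih =>
    show M.inv.δ (M.inv.stateAt .c (cat [true, true] (fun _ => false)) (n + 2))
        (cat [true, true] (fun _ => false) (n + 2)) = .b
    rw [ih]
    rfl

theorem csymm_w2 :
    M.inv.act .c (cat [true, true] (fun _ => false)) = cat [true, false] (fun _ => true) := by
  funext n
  match n with
  | 0 => rfl
  | 1 => rfl
  | n + 2 =>
    show M.inv.τ (M.inv.stateAt .c (cat [true, true] (fun _ => false)) (n + 2))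
        (cat [true, true] (fun _ => false) (n + 2)) = _
    rw [inv_stateAt_w2]
    rfl

theorem part3 :
    ⇑(c⁻¹ * c⁻¹) (cat [true] (fun _ => false)) = cat [true, false] (fun _ => true) := by
  have : ⇑(c⁻¹ * c⁻¹) (cat [true] (fun _ => false))
      = M.inv.act .c (M.inv.act .c (cat [true] (fun _ => false))) := rfl
  rw [this, csymm_w1, csymm_w2]

/-- In the automaton group of automaton 2402, `c` has infinite order:
`cⁿ(10^∞)` is left-shift equivalent to `0^∞` for all `n ≥ 0` (using that `x|₀₀ = c`
for every generator `x`), while `c⁻²(10^∞) = 101^∞`. -/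
theorem automaton2402_c_infinite_order :
    (∀ x ∈ ({a, b, c} : Set (Equiv.Perm (ℕ → Bool))), resW ⇑x [false, false] = ⇑c) ∧
    (∀ n : ℕ, seq (⇑(c ^ n) (cat [true] (fun _ => false))) (fun _ => false)) ∧
    (⇑(c⁻¹ * c⁻¹) (cat [true] (fun _ => false)) = cat [true, false] (fun _ => true)) ∧
    (∀ n : ℕ, 1 ≤ n → c ^ n ≠ 1) := by
  refine ⟨?_, ?_, part3, ?_⟩
  · intro x hx
    simp only [Set.mem_insert_iff, Set.mem_singleton_iff] at hx
    rcases hx with rfl | rfl | rfl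
    · exact resW_eq_c .a
    · exact resW_eq_c .b
    · exact resW_eq_c .c
  · intro n
    exact ⟨1 + 2 * n, 0, fun m => pow_tail n m⟩
  · intro n hn hcn
    have h2n : c ^ (2 * n) = 1 := by
      rw [show 2 * n = n + n by omega, pow_add, hcn, one_mul]
    have key : c ^ (2 * n - 2) = c⁻¹ * c⁻¹ := by
      have h2 : c ^ (2 * n - 2) * (c * c) = 1 := by
        rw [← mul_assoc, ← pow_succ, ← pow_succ, show 2 * n - 2 + 1 + 1 = 2 * n by omega, h2n]
      calc c ^ (2 * n - 2) = c ^ (2 * n - 2) * (c * c) * (c * c)⁻¹ := by group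
        _ = (c * c)⁻¹ := by rw [h2, one_mul]
        _ = c⁻¹ * c⁻¹ := by rw [mul_inv_rev]
    have h := pow_tail (2 * n - 2) 2
    rw [key, part3] at h
    rw [show 2 + (1 + 2 * (2 * n - 2)) = (1 + 2 * (2 * n - 2)) + 2 by omega] at h
    have h' : cat [true, false] (fun _ => true) ((1 + 2 * (2 * n - 2)) + 2) = true := rfl
    rw [h'] at h
    exact Bool.true_eq_false.mp h


end Stmt17
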